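/- Let N > 0, Q > 0, ū ≥ 0, V₁ > ū, and define the 5G operator's profit under uniformly distributed congestion sensitivity by π̄₁(p) = N·p·min(1, √((V₁ − ū − p)Q/N)) for 0 ≤ p ≤ V₁ − ū and π̄₁(p) = 0 for p > V₁ − ū. If Q < 3N/(V₁ − ū), then for every p ≥ 0 one has π̄₁(p) ≤ π̄₁((2/3)(V₁ − ū)), and π̄₁((2/3)(V₁ − ū)) = (2/3)(V₁ − ū)·√((V₁ − ū)QN/3). -/

import Mathlib

/-- Proposition 1 of the paper (uniform distribution, small-capacity regime
`Q < 3N/(V₁ − ū)`): the benchmark 5G profit is maximized at price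
`(2/3)(V₁ − ū)`, with optimal profit `(2/3)(V₁ − ū)·√((V₁ − ū)QN/3)`. -/
theorem stmt_4 (N Q ubar V₁ : ℝ) (π : ℝ → ℝ)
    (hN : 0 < N) (hQ : 0 < Q) (hubar : 0 ≤ ubar) (hV : ubar < V₁)
    (hπ₁ : ∀ p, 0 ≤ p → p ≤ V₁ - ubar →
      π p = N * p * min 1 (Real.sqrt ((V₁ - ubar - p) * Q / N)))
    (hπ₂ : ∀ p, V₁ - ubar < p → π p = 0)
    (hQsmall : Q < 3 * N / (V₁ - ubar)) :
    (∀ p, 0 ≤ p → π p ≤ π ((2 / 3) * (V₁ - ubar))) ∧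
      π ((2 / 3) * (V₁ - ubar))
        = (2 / 3) * (V₁ - ubar) * Real.sqrt ((V₁ - ubar) * Q * N / 3) := by
  set a := V₁ - ubar with ha_def
  have ha : 0 < a := sub_pos.mpr hV
  have hNne : (N : ℝ) ≠ 0 := hN.ne'
  have haq : Q * a < 3 * N := (lt_div_iff₀ ha).mp hQsmall
  have hp0 : (0 : ℝ) ≤ 2 / 3 * a := by positivity
  have hp1 : 2 / 3 * a ≤ a := by linarith
  have hval : π (2 / 3 * a) = 2 / 3 * a * Real.sqrt (a * Q * N / 3) := by
    rw [hπ₁ _ hp0 hp1]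
    have hu : (a - 2 / 3 * a) * Q / N = a * Q / (3 * N) := by
      ring
    rw [hu]
    have hlt : a * Q / (3 * N) < 1 := by
      rw [div_lt_one (by positivity)]; linarith
    have hmin : min 1 (Real.sqrt (a * Q / (3 * N))) = Real.sqrt (a * Q / (3 * N)) :=
      min_eq_right (le_of_lt ((Real.sqrt_lt' one_pos).mpr (by simpa using hlt)))
    rw [hmin]
    have hNs : N * Real.sqrt (a * Q / (3 * N)) = Real.sqrt (a * Q * N / 3) := by
      rw [show a * Q * N / 3 = N ^ 2 * (a * Q / (3 * N)) by field_simp,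
        Real.sqrt_mul (by positivity), Real.sqrt_sq hN.le]
    calc N * (2 / 3 * a) * Real.sqrt (a * Q / (3 * N))
        = 2 / 3 * a * (N * Real.sqrt (a * Q / (3 * N))) := by ring
      _ = 2 / 3 * a * Real.sqrt (a * Q * N / 3) := by rw [hNs]
  refine ⟨?_, hval⟩
  intro p hp
  rw [hval]
  by_cases hpa : p ≤ a
  · rw [hπ₁ p hp hpa]
    have step1 : N * p * min 1 (Real.sqrt ((a - p) * Q / N))
        ≤ N * p * Real.sqrt ((a - p) * Q / N) :=
      mul_le_mul_of_nonneg_left (min_le_right _ _) (by positivity)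
    have lhs_eq : N * p * Real.sqrt ((a - p) * Q / N)
        = Real.sqrt ((N * p) ^ 2 * ((a - p) * Q / N)) := by
      rw [Real.sqrt_mul (by positivity), Real.sqrt_sq (by positivity)]
    have rhs_eq : 2 / 3 * a * Real.sqrt (a * Q * N / 3)
        = Real.sqrt ((2 / 3 * a) ^ 2 * (a * Q * N / 3)) := by
      rw [Real.sqrt_mul (by positivity), Real.sqrt_sq (by positivity)]
    have hcube : 0 ≤ (p - 2 / 3 * a) ^ 2 * (p + a / 3) :=
      mul_nonneg (sq_nonneg _) (by linarith)
    have inner : (N * p) ^ 2 * ((a - p) * Q / N) ≤ (2 / 3 * a) ^ 2 * (a * Q * N / 3) := by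
      have h1 : (N * p) ^ 2 * ((a - p) * Q / N) = N * (p ^ 2 * (a - p) * Q) := by
        field_simp
      have h2 : (2 / 3 * a) ^ 2 * (a * Q * N / 3) = N * (4 * a ^ 3 / 27 * Q) := by ring
      rw [h1, h2]
      have := mul_nonneg (mul_nonneg hN.le hQ.le) hcube
      nlinarith [this]
    calc N * p * min 1 (Real.sqrt ((a - p) * Q / N))
        ≤ N * p * Real.sqrt ((a - p) * Q / N) := step1
      _ = Real.sqrt ((N * p) ^ 2 * ((a - p) * Q / N)) := lhs_eq
      _ ≤ Real.sqrt ((2 / 3 * a) ^ 2 * (a * Q * N / 3)) := Real.sqrt_le_sqrt inner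
      _ = 2 / 3 * a * Real.sqrt (a * Q * N / 3) := rhs_eq.symm
  · rw [hπ₂ p (by linarith)]
    positivity
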